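/- Let φ be an automorphism of the free group F_n, let G = F_n ⋊_φ ℤ, and let s = (1, 1) ∈ G be the stable letter. Suppose w ∈ F_n (viewed as an element of G) is nontrivial, is not a proper power in F_n (i.e. if w = v^m with v ∈ F_n and m ∈ ℤ then m = 1 or m = −1), and commutes with s (equivalently, φ(w) = w). Then the subgroup ⟨w, s⟩ of G is equal to its own normalizer in G. -/

import Mathlib

open SemidirectProduct

/-- The range of the conjugation homomorphism is a normal subgroup of `MulAut G`. -/
instance MulAut.conj_range_normal (G : Type*) [Group G] :
    ((MulAut.conj : G →* MulAut G).range).Normal := by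
  constructor
  rintro - ⟨g, rfl⟩ α
  refine ⟨α g, ?_⟩
  ext x
  simp [MulAut.conj_apply, MulAut.mul_apply, map_mul]

/-- The outer automorphism group `Out(G) = Aut(G)/Inn(G)`. -/
abbrev OutG (G : Type*) [Group G] : Type _ :=
  MulAut G ⧸ (MulAut.conj : G →* MulAut G).range

/-- The conjugacy length of an element of a free group: the minimal length of the
reduced word of a conjugate. -/
noncomputable def conjLength {n : ℕ} (g : FreeGroup (Fin n)) : ℕ :=
  sInf {m : ℕ | ∃ v : FreeGroup (Fin n), FreeGroup.norm (v * g * v⁻¹) = m}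

/-- `φ` is polynomially growing of degree `d`: every element grows at most like `k ^ d`
under iteration, and some element grows at least like `k ^ d`. -/
def PolyGrowth {n : ℕ} (φ : MulAut (FreeGroup (Fin n))) (d : ℕ) : Prop :=
  (∀ g : FreeGroup (Fin n), ∃ C : ℝ, ∀ k : ℕ, 1 ≤ k →
      (conjLength ((φ ^ k) g) : ℝ) ≤ C * (k : ℝ) ^ d) ∧
  ∃ g₀ : FreeGroup (Fin n), ∃ A : ℝ, 0 < A ∧ ∀ k : ℕ, 1 ≤ k →
      A * (k : ℝ) ^ d ≤ (conjLength ((φ ^ k) g₀) : ℝ)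

/-- The free-by-cyclic group `F_n ⋊_φ ℤ`, where the generator `1` of `ℤ` acts by `φ`. -/
abbrev FreeByCyclic (n : ℕ) (φ : MulAut (FreeGroup (Fin n))) : Type :=
  FreeGroup (Fin n) ⋊[zpowersHom (MulAut (FreeGroup (Fin n))) φ] Multiplicative ℤ

open Classical in
lemma eq_of_commute_of {T : Type*} {a b : T}
    (h : Commute (FreeGroup.of a) (FreeGroup.of b)) : a = b := by
  by_contra hab
  have h2 := congrArg
    (FreeGroup.lift (fun x => if x = a then Equiv.swap (0 : Fin 3) 1 else Equiv.swap 1 2)) h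
  rw [map_mul, map_mul, FreeGroup.lift_apply_of, FreeGroup.lift_apply_of, if_pos rfl,
    if_neg (fun h' : b = a => hab h'.symm)] at h2
  exact absurd h2 (by decide)

lemma mem_zpowers_of_subsingleton {T : Type*} [Subsingleton T] (a : T) (x : FreeGroup T) :
    x ∈ Subgroup.zpowers (FreeGroup.of a) := by
  induction x using FreeGroup.induction_on with
  | C1 => exact one_mem _
  | of b => rw [Subsingleton.elim b a]; exact Subgroup.mem_zpowers _
  | inv_of b hb => exact inv_mem hb
  | mul x y hx hy => exact mul_mem hx hy

lemma of_zpow_eq_one {T : Type*} {a : T} {m : ℤ}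
    (h : (FreeGroup.of a : FreeGroup T) ^ m = 1) : m = 0 := by
  have h2 := congrArg (FreeGroup.lift (fun _ : T => (Multiplicative.ofAdd (1 : ℤ)))) h
  simp only [map_zpow, FreeGroup.lift_apply_of, map_one] at h2
  have h3 : Multiplicative.ofAdd (m • (1:ℤ)) = Multiplicative.ofAdd (0:ℤ) := by
    rw [ofAdd_zsmul]; simpa using h2
  have := Multiplicative.ofAdd.injective h3
  simpa using this

/-- A nontrivial free group in which all elements commute has a generator `z` of infinite
order generating everything. -/
lemma exists_cyclic_generator (H : Type*) [Group H] [IsFreeGroup H]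
    (hcomm : ∀ x y : H, x * y = y * x) (hne : ∃ x : H, x ≠ 1) :
    ∃ z : H, (∀ x : H, x ∈ Subgroup.zpowers z) ∧ ∀ m : ℤ, z ^ m = 1 → m = 0 := by
  classical
  let e : H ≃* FreeGroup (IsFreeGroup.Generators H) := IsFreeGroup.toFreeGroup H
  have hsub : Subsingleton (IsFreeGroup.Generators H) := by
    constructor
    intro a b
    apply eq_of_commute_of (a := a) (b := b)
    have hc := hcomm (e.symm (FreeGroup.of a)) (e.symm (FreeGroup.of b))
    have := congrArg e hc
    exact (by simpa [map_mul] using this :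
      FreeGroup.of a * FreeGroup.of b = FreeGroup.of b * FreeGroup.of a)
  have hno : Nonempty (IsFreeGroup.Generators H) := by
    by_contra hempty
    have hE : IsEmpty (IsFreeGroup.Generators H) := not_nonempty_iff.mp hempty
    obtain ⟨x, hx⟩ := hne
    have : e x = 1 := by
      induction e x using FreeGroup.induction_on with
      | C1 => rfl
      | of b => exact hE.elim b
      | inv_of b hb => exact hE.elim b
      | mul x y hx hy => rw [hx, hy, one_mul]
    exact hx (by simpa using congrArg e.symm this)
  obtain ⟨a⟩ := hno
  refine ⟨e.symm (FreeGroup.of a), ?_, ?_⟩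
  · intro x
    obtain ⟨m, hm⟩ := Subgroup.mem_zpowers_iff.mp (mem_zpowers_of_subsingleton a (e x))
    exact Subgroup.mem_zpowers_iff.mpr ⟨m, by
      have := congrArg e.symm hm
      simpa [map_zpow] using this⟩
  · intro m hm
    apply of_zpow_eq_one (a := a)
    have := congrArg e hm
    simpa [map_zpow] using this

/-- Free groups are torsion-free: nontrivial elements have no nontrivial roots of unity. -/
lemma zpow_eq_one_imp {G : Type*} [Group G] [IsFreeGroup G] {w : G} (hw : w ≠ 1)
    {k : ℤ} (h : w ^ k = 1) : k = 0 := by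
  classical
  set H := Subgroup.zpowers w with hH
  have hcomm : ∀ x y : H, x * y = y * x := by
    rintro ⟨x, hx⟩ ⟨y, hy⟩
    obtain ⟨i, rfl⟩ := Subgroup.mem_zpowers_iff.mp hx
    obtain ⟨j, rfl⟩ := Subgroup.mem_zpowers_iff.mp hy
    ext
    exact zpow_mul_comm w i j
  have hne : ∃ x : H, x ≠ 1 := ⟨⟨w, Subgroup.mem_zpowers w⟩, by
    simp [Subtype.ext_iff, hw]⟩
  obtain ⟨z, hz, hzo⟩ := exists_cyclic_generator H hcomm hne
  obtain ⟨m, hm⟩ := Subgroup.mem_zpowers_iff.mp (hz ⟨w, Subgroup.mem_zpowers w⟩)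
  have hmne : m ≠ 0 := by
    rintro rfl
    apply hw
    simpa [Subtype.ext_iff] using hm.symm
  have hzk : z ^ (m * k) = 1 := by
    rw [zpow_mul, hm]
    ext
    simpa [Subtype.ext_iff] using h
  have := hzo _ hzk
  exact (mul_eq_zero.mp this).resolve_left hmne

/-- In a free group, if `u` commutes with a nontrivial non-proper-power `w`,
then `u` is a power of `w`. -/
lemma mem_zpowers_of_commute {G : Type*} [Group G] [IsFreeGroup G] {u w : G} (hw : w ≠ 1)
    (hnp : ∀ (v : G) (m : ℤ), w = v ^ m → m = 1 ∨ m = -1)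
    (hc : Commute u w) : u ∈ Subgroup.zpowers w := by
  classical
  set H := Subgroup.closure {u, w} with hH
  have hu : u ∈ H := Subgroup.subset_closure (by simp)
  have hwH : w ∈ H := Subgroup.subset_closure (by simp)
  have hcomm : ∀ x y : H, x * y = y * x := by
    rintro ⟨x, hx⟩ ⟨y, hy⟩
    ext
    show x * y = y * x
    induction hx, hy using Subgroup.closure_induction₂ with
    | mem p q hp hq =>
      rcases hp with rfl | rfl <;> rcases hq with rfl | rfl
      · rfl
      · exact hc
      · exact hc.symm
      · rfl
    | one_left q hq => exact Commute.one_left q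
    | one_right p hp => exact Commute.one_right p
    | mul_left p₁ p₂ q h₁ h₂ h₃ h1 h2 => exact Commute.mul_left h1 h2
    | mul_right q₁ q₂ p h₁ h₂ h₃ h1 h2 => exact Commute.mul_right h1 h2
    | inv_left p q h₁ h₂ h1 => exact Commute.inv_left h1
    | inv_right p q h₁ h₂ h1 => exact Commute.inv_right h1
  have hne : ∃ x : H, x ≠ 1 := ⟨⟨w, hwH⟩, by simp [Subtype.ext_iff, hw]⟩
  obtain ⟨z, hz, -⟩ := exists_cyclic_generator H hcomm hne
  obtain ⟨q, hq⟩ := Subgroup.mem_zpowers_iff.mp (hz ⟨w, hwH⟩)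
  obtain ⟨p, hp⟩ := Subgroup.mem_zpowers_iff.mp (hz ⟨u, hu⟩)
  have hq' : w = (z : G) ^ q := by
    simpa [Subtype.ext_iff] using hq.symm
  have hp' : u = (z : G) ^ p := by
    simpa [Subtype.ext_iff] using hp.symm
  rcases hnp _ _ hq' with h1 | h1
  · subst h1
    rw [zpow_one] at hq'
    exact Subgroup.mem_zpowers_iff.mpr ⟨p, by rw [hq', hp']⟩
  · subst h1
    rw [zpow_neg_one] at hq'
    refine Subgroup.mem_zpowers_iff.mpr ⟨-p, ?_⟩
    rw [hq', hp']
    simp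

/-- Key free-group lemma: if `u w u⁻¹` and `u⁻¹ w u` are both powers of `w`,
with `w` nontrivial and not a proper power, then `u` is a power of `w`. -/
lemma mem_zpowers_of_conj {G : Type*} [Group G] [IsFreeGroup G] {u w : G} (hw : w ≠ 1)
    (hnp : ∀ (v : G) (m : ℤ), w = v ^ m → m = 1 ∨ m = -1)
    {a b : ℤ} (ha : u * w * u⁻¹ = w ^ a) (hb : u⁻¹ * w * u = w ^ b) :
    u ∈ Subgroup.zpowers w := by
  have hba : w ^ (b * a) = w := by
    calc w ^ (b * a) = (w ^ b) ^ a := by rw [zpow_mul]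
    _ = (u⁻¹ * w * u) ^ a := by rw [hb]
    _ = (u⁻¹ * w * u⁻¹⁻¹) ^ a := by rw [inv_inv]
    _ = u⁻¹ * w ^ a * u⁻¹⁻¹ := conj_zpow
    _ = u⁻¹ * (u * w * u⁻¹) * u := by rw [ha, inv_inv]
    _ = w := by group
  have h1 : w ^ (b * a - 1) = 1 := by
    rw [zpow_sub, hba, zpow_one, mul_inv_cancel]
  have h2 : b * a = 1 := by
    have := zpow_eq_one_imp hw h1
    omega
  rcases Int.mul_eq_one_iff_eq_one_or_neg_one.mp h2 with ⟨hb1, ha1⟩ | ⟨hb1, ha1⟩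
  · subst ha1
    rw [zpow_one] at ha
    have hc : Commute u w := by
      have := ha
      rw [mul_inv_eq_iff_eq_mul] at this
      exact this
    exact mem_zpowers_of_commute hw hnp hc
  · subst ha1
    rw [zpow_neg_one] at ha
    by_cases hu : u = 1
    · subst hu; exact one_mem _
    · exfalso
      have h3 : u * u * w * (u * u)⁻¹ = w := by
        calc u * u * w * (u * u)⁻¹ = u * (u * w * u⁻¹) * u⁻¹ := by group
        _ = u * w⁻¹ * u⁻¹ := by rw [ha]
        _ = (u * w * u⁻¹)⁻¹ := by group
        _ = w⁻¹⁻¹ := by rw [ha]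
        _ = w := inv_inv w
      have hc2 : Commute (u * u) w := by
        rw [mul_inv_eq_iff_eq_mul] at h3
        exact h3
      obtain ⟨p, hp⟩ := Subgroup.mem_zpowers_iff.mp (mem_zpowers_of_commute hw hnp hc2)
      have h6 : u * w ^ p * u⁻¹ = w ^ (-p) := by
        calc u * w ^ p * u⁻¹ = (u * w * u⁻¹) ^ p := conj_zpow.symm
        _ = w⁻¹ ^ p := by rw [ha]
        _ = w ^ (-p) := by rw [inv_zpow, zpow_neg]
      have h5 : u * (u * u) * u⁻¹ = u * u := by group
      rw [← hp, h6] at h5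
      have h7 : w ^ (-p - p) = 1 := by
        rw [zpow_sub, h5, mul_inv_cancel]
      have := zpow_eq_one_imp hw h7
      have hp0 : p = 0 := by omega
      subst hp0
      rw [zpow_zero] at hp
      -- u * u = 1 hence u ^ 2 = 1
      have h8 : u ^ (2 : ℤ) = 1 := by
        rw [show (2:ℤ) = 1 + 1 by norm_num, zpow_add, zpow_one, hp]
      have := zpow_eq_one_imp hu h8
      omega

section Semidirect

variable {n : ℕ} {φ : MulAut (FreeGroup (Fin n))} {w : FreeGroup (Fin n)}

/-- If `φ` fixes `w`, so does every integer power of `φ`. -/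
lemma zpow_fix (hfix : φ w = w) (m : ℤ) : (φ ^ m) w = w := by
  have hinv : φ⁻¹ w = w := by
    apply φ.injective
    rw [← MulAut.mul_apply, mul_inv_cancel, MulAut.one_apply, hfix]
  induction m using Int.induction_on with
  | zero => rfl
  | succ k ih =>
    rw [zpow_add, zpow_one, MulAut.mul_apply, hfix, ih]
  | pred k ih =>
    rw [zpow_sub, zpow_one, MulAut.mul_apply, hinv, ih]

lemma act_fix_zpow (hfix : φ w = w) (t : Multiplicative ℤ) (j : ℤ) :
    (zpowersHom (MulAut (FreeGroup (Fin n))) φ) t (w ^ j) = w ^ j := by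
  rw [zpowersHom_apply, map_zpow, zpow_fix hfix]

lemma act_fix (hfix : φ w = w) (t : Multiplicative ℤ) :
    (zpowersHom (MulAut (FreeGroup (Fin n))) φ) t w = w := by
  simpa using act_fix_zpow hfix t 1

/-- The subgroup of the free-by-cyclic group of elements whose free part is a power of `w`. -/
def Kgrp (hfix : φ w = w) : Subgroup (FreeByCyclic n φ) where
  carrier := {g | g.left ∈ Subgroup.zpowers w}
  one_mem' := by
    show (1 : FreeByCyclic n φ).left ∈ Subgroup.zpowers w
    rw [SemidirectProduct.one_left]
    exact one_mem _
  mul_mem' := by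
    rintro a b ha hb
    obtain ⟨i, hi⟩ := Subgroup.mem_zpowers_iff.mp ha
    obtain ⟨j, hj⟩ := Subgroup.mem_zpowers_iff.mp hb
    show (a * b).left ∈ Subgroup.zpowers w
    rw [SemidirectProduct.mul_left, ← hi, ← hj, act_fix_zpow hfix]
    exact Subgroup.mem_zpowers_iff.mpr ⟨i + j, by rw [zpow_add]⟩
  inv_mem' := by
    rintro a ha
    obtain ⟨i, hi⟩ := Subgroup.mem_zpowers_iff.mp ha
    show a⁻¹.left ∈ Subgroup.zpowers w
    rw [SemidirectProduct.inv_left, ← hi, ← zpow_neg, act_fix_zpow hfix]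
    exact Subgroup.mem_zpowers_iff.mpr ⟨-i, rfl⟩

lemma mem_Kgrp (hfix : φ w = w) {g : FreeByCyclic n φ} :
    g ∈ Kgrp hfix ↔ g.left ∈ Subgroup.zpowers w := Iff.rfl

lemma closure_eq_Kgrp (hfix : φ w = w) :
    Subgroup.closure
        ({SemidirectProduct.inl w, SemidirectProduct.inr (Multiplicative.ofAdd 1)} :
          Set (FreeByCyclic n φ)) = Kgrp hfix := by
  apply le_antisymm
  · rw [Subgroup.closure_le]
    rintro g (rfl | rfl)
    · exact Subgroup.mem_zpowers w
    · show (SemidirectProduct.inr (Multiplicative.ofAdd (1:ℤ)) :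
          FreeByCyclic n φ).left ∈ Subgroup.zpowers w
      rw [SemidirectProduct.left_inr]
      exact one_mem _
  · intro g hg
    obtain ⟨i, hi⟩ := Subgroup.mem_zpowers_iff.mp ((mem_Kgrp hfix).mp hg)
    have hdecomp : g = SemidirectProduct.inl g.left * SemidirectProduct.inr g.right :=
      (SemidirectProduct.inl_left_mul_inr_right g).symm
    rw [hdecomp, ← hi]
    apply mul_mem
    · rw [map_zpow]
      exact zpow_mem (Subgroup.subset_closure (by simp)) i
    · have : g.right = (Multiplicative.ofAdd (1 : ℤ)) ^ (g.right.toAdd) := by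
        rw [← ofAdd_zsmul, smul_eq_mul, mul_one, ofAdd_toAdd]
      rw [this, map_zpow]
      exact zpow_mem (Subgroup.subset_closure (by simp)) _

end Semidirect
/-- If `w ∈ F_n` is nontrivial, not a proper power, and is fixed by `φ` (so commutes with
the stable letter `s`), then `⟨w, s⟩ ≤ F_n ⋊_φ ℤ` is its own normalizer. -/
theorem closure_w_s_self_normalizing (n : ℕ) (φ : MulAut (FreeGroup (Fin n)))
    (w : FreeGroup (Fin n)) (hw : w ≠ 1)
    (hnp : ∀ (v : FreeGroup (Fin n)) (m : ℤ), w = v ^ m → m = 1 ∨ m = -1)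
    (hfix : φ w = w) :
    Subgroup.normalizer ((Subgroup.closure
        ({SemidirectProduct.inl w, SemidirectProduct.inr (Multiplicative.ofAdd 1)} :
          Set (FreeByCyclic n φ))) : Set (FreeByCyclic n φ))
      = Subgroup.closure
          ({SemidirectProduct.inl w, SemidirectProduct.inr (Multiplicative.ofAdd 1)} :
            Set (FreeByCyclic n φ)) := by
  rw [closure_eq_Kgrp hfix]
  apply le_antisymm
  · intro g hg
    rw [Subgroup.mem_normalizer_iff] at hg
    set ψ := zpowersHom (MulAut (FreeGroup (Fin n))) φ with hψ
    set u := g.left with hu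
    set t := g.right with ht
    have hm1 : g * SemidirectProduct.inl w * g⁻¹ ∈ Kgrp hfix :=
      (hg (SemidirectProduct.inl w)).mp (by
        show (SemidirectProduct.inl w : FreeByCyclic n φ).left ∈ Subgroup.zpowers w
        rw [SemidirectProduct.left_inl]
        exact Subgroup.mem_zpowers w)
    have hl1 : (g * SemidirectProduct.inl w * g⁻¹).left = u * w * u⁻¹ := by
      rw [SemidirectProduct.mul_left, SemidirectProduct.mul_left,
        SemidirectProduct.left_inl, SemidirectProduct.mul_right,
        SemidirectProduct.right_inl, mul_one, SemidirectProduct.inv_left,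
        act_fix hfix, map_inv, map_inv, ← MulAut.mul_apply, ← map_mul,
        mul_inv_cancel, map_one, MulAut.one_apply]
    obtain ⟨a, haa⟩ := Subgroup.mem_zpowers_iff.mp ((mem_Kgrp hfix).mp hm1)
    rw [hl1] at haa
    have hm2 : g⁻¹ * SemidirectProduct.inl w * g ∈ Kgrp hfix := by
      refine (hg (g⁻¹ * SemidirectProduct.inl w * g)).mpr ?_
      have he : g * (g⁻¹ * SemidirectProduct.inl w * g) * g⁻¹
          = SemidirectProduct.inl w := by group
      rw [he]
      show (SemidirectProduct.inl w : FreeByCyclic n φ).left ∈ Subgroup.zpowers w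
      rw [SemidirectProduct.left_inl]
      exact Subgroup.mem_zpowers w
    have hl2 : (g⁻¹ * SemidirectProduct.inl w * g).left
        = ψ t⁻¹ u⁻¹ * w * ψ t⁻¹ u := by
      rw [SemidirectProduct.mul_left, SemidirectProduct.mul_left,
        SemidirectProduct.left_inl, SemidirectProduct.mul_right,
        SemidirectProduct.right_inl, mul_one, SemidirectProduct.inv_left,
        SemidirectProduct.inv_right, act_fix hfix]
    obtain ⟨b, hbb⟩ := Subgroup.mem_zpowers_iff.mp ((mem_Kgrp hfix).mp hm2)
    rw [hl2] at hbb
    have hb' : u⁻¹ * w * u = w ^ b := by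
      have hc := congrArg (ψ t) hbb
      rw [map_mul, map_mul, act_fix hfix, act_fix_zpow hfix, map_inv, map_inv,
        ← MulAut.mul_apply, ← map_mul, mul_inv_cancel,
        map_one, MulAut.one_apply] at hc
      exact hc.symm
    have hukey : u ∈ Subgroup.zpowers w :=
      mem_zpowers_of_conj hw hnp haa.symm hb'
    exact (mem_Kgrp hfix).mpr hukey
  · exact Subgroup.le_normalizer
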